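/- arXiv:2104.00591 — 4 statements merged into one kernel-verified Lean document; each statement's English description precedes it below -/
import Mathlib

section
/- Let M be a negative definite symmetric real n×n matrix with nonnegative off-diagonal entries, and let a = (a_1,...,a_n) be a real vector such that (Ma)_j ≥ 0 for all j. Then a_i ≤ 0 for all i. -/
open Matrix

/-- Key lemma (Kollár–Mori 3.41), part 1: if `M` is a negative definite symmetric
real matrix with nonnegative off-diagonal entries (an intersection matrix of
exceptional curves) and `(M a)_j ≥ 0` for all `j`, then `a_i ≤ 0` for all `i`. -/
theorem neg_def_nonneg_mulVec_nonpos {n : ℕ} (M : Matrix (Fin n) (Fin n) ℝ)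
    (hsymm : M.IsSymm)
    (hneg : ∀ x : Fin n → ℝ, x ≠ 0 → x ⬝ᵥ M.mulVec x < 0)
    (hoff : ∀ i j : Fin n, i ≠ j → 0 ≤ M i j)
    (a : Fin n → ℝ) (ha : ∀ j, 0 ≤ M.mulVec a j) :
    ∀ i, a i ≤ 0 := by
  by_contra h
  push_neg at h
  set p : Fin n → ℝ := fun i => max (a i) 0 with hp
  have hsplit : ∀ j, p j = a j + max (-a j) 0 := by
    intro j
    rcases le_total 0 (a j) with hj | hj
    · rw [hp]; dsimp only
      rw [max_eq_left hj, max_eq_right (neg_nonpos.mpr hj)]; ring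
    · rw [hp]; dsimp only
      rw [max_eq_right hj, max_eq_left (neg_nonneg.mpr hj)]; ring
  have hpne : p ≠ 0 := by
    obtain ⟨i, hi⟩ := h
    intro h0
    have h1 : p i = 0 := congrFun h0 i
    rw [hp] at h1
    simp only at h1
    have : (0:ℝ) < max (a i) 0 := lt_max_of_lt_left hi
    rw [h1] at this
    exact lt_irrefl _ this
  have hneg' := hneg p hpne
  have hge : 0 ≤ p ⬝ᵥ M.mulVec p := by
    have hEq : p ⬝ᵥ M.mulVec p =
        ∑ i, (p i * M.mulVec a i + ∑ j, p i * (M i j * max (-a j) 0)) := by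
      simp only [dotProduct, mulVec]
      refine Finset.sum_congr rfl fun i _ => ?_
      rw [Finset.mul_sum, Finset.mul_sum, ← Finset.sum_add_distrib]
      refine Finset.sum_congr rfl fun j _ => ?_
      rw [hsplit j]; ring
    rw [hEq]
    refine Finset.sum_nonneg fun i _ => add_nonneg ?_ ?_
    · exact mul_nonneg (le_max_right _ _) (ha i)
    · refine Finset.sum_nonneg fun j _ => ?_
      rcases eq_or_ne i j with rfl | hij
      · rcases le_total (a i) 0 with hi | hi
        · have hpi : p i = 0 := by rw [hp]; simpa using max_eq_right hi
          simp [hpi]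
        · have hmi : max (-a i) 0 = 0 := max_eq_right (neg_nonpos.mpr hi)
          simp [hmi]
      · exact mul_nonneg (le_max_right _ _)
          (mul_nonneg (hoff i j hij) (le_max_right _ _))
  linarith
end

section
/- Let M be a negative definite symmetric real n×n matrix with nonnegative off-diagonal entries whose associated graph (edges where M_{ij} > 0) is connected, and let a be a real vector with (Ma)_j ≥ 0 for all j. If (Ma)_j > 0 for some j, then a_i < 0 for all i. -/
open Matrix

/-- Key lemma, connected case with a strict inequality: if `M` is a negative
definite symmetric real matrix with nonnegative off-diagonal entries, whose
associated graph (edges where `M i j > 0`, `i ≠ j`) is connected, `(M a)_j ≥ 0`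
for all `j`, and `(M a)_j > 0` for some `j`, then `a_i < 0` for all `i`. -/
theorem neg_def_connected_strict {n : ℕ} (M : Matrix (Fin n) (Fin n) ℝ)
    (hsymm : M.IsSymm)
    (hneg : ∀ x : Fin n → ℝ, x ≠ 0 → x ⬝ᵥ M.mulVec x < 0)
    (hoff : ∀ i j : Fin n, i ≠ j → 0 ≤ M i j)
    (hconn : ∀ i j : Fin n, Relation.ReflTransGen (fun k l => k ≠ l ∧ 0 < M k l) i j)
    (a : Fin n → ℝ) (ha : ∀ j, 0 ≤ M.mulVec a j)
    (hstrict : ∃ j, 0 < M.mulVec a j) :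
    ∀ i, a i < 0 := by
  -- Step 1: a ≤ 0, using the positive part x of a.
  set x : Fin n → ℝ := fun i => max (a i) 0 with hxdef
  have hxnn : ∀ i, 0 ≤ x i := fun i => le_max_right _ _
  have hxsub : ∀ i, 0 ≤ x i - a i := fun i => sub_nonneg.2 (le_max_left _ _)
  have hdiag : ∀ i, x i * (x i - a i) = 0 := by
    intro i
    rcases le_total (a i) 0 with h | h
    · have : x i = 0 := max_eq_right h
      simp [this]
    · have : x i = a i := max_eq_left h
      simp [this]
  have hx0 : x = 0 := by
    by_contra h
    have hlt := hneg x h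
    have h1 : 0 ≤ x ⬝ᵥ M.mulVec a :=
      Finset.sum_nonneg fun i _ => mul_nonneg (hxnn i) (ha i)
    have h2 : x ⬝ᵥ M.mulVec x - x ⬝ᵥ M.mulVec a
        = ∑ i, ∑ j, x i * (M i j * (x j - a j)) := by
      simp only [dotProduct, mulVec, ← Finset.sum_sub_distrib, Finset.mul_sum,
        mul_sub]
    have h3 : 0 ≤ ∑ i, ∑ j, x i * (M i j * (x j - a j)) := by
      apply Finset.sum_nonneg; intro i _
      apply Finset.sum_nonneg; intro j _
      rcases eq_or_ne i j with rfl | hij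
      · have : x i * (M i i * (x i - a i)) = M i i * (x i * (x i - a i)) := by
          ring
        rw [this, hdiag i, mul_zero]
      · exact mul_nonneg (hxnn i) (mul_nonneg (hoff i j hij) (hxsub j))
    linarith
  have hle : ∀ i, a i ≤ 0 := by
    intro i
    have : max (a i) 0 = 0 := congrFun hx0 i
    exact max_eq_right_iff.mp this
  -- Step 2: the zero set propagates along edges.
  have hstep : ∀ k l : Fin n, (k ≠ l ∧ 0 < M k l) → a k = 0 → a l = 0 := by
    intro k l ⟨hkl, hMkl⟩ hak
    have hsum : (0:ℝ) ≤ ∑ j, M k j * a j := ha k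
    have hterm : ∀ j ∈ Finset.univ, M k j * a j ≤ 0 := by
      intro j _
      rcases eq_or_ne k j with rfl | hkj
      · simp [hak]
      · exact mul_nonpos_of_nonneg_of_nonpos (hoff k j hkj) (hle j)
    have hzero : ∑ j, M k j * a j = 0 :=
      le_antisymm (Finset.sum_nonpos hterm) hsum
    have := (Finset.sum_eq_zero_iff_of_nonpos hterm).mp hzero l (Finset.mem_univ l)
    rcases mul_eq_zero.mp this with h | h
    · exact absurd h (ne_of_gt hMkl)
    · exact h
  have hprop : ∀ i j : Fin n, a i = 0 → a j = 0 := by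
    intro i j hai
    induction hconn i j with
    | refl => exact hai
    | tail _ hkl ih => exact hstep _ _ hkl ih
  -- Step 3: conclude.
  intro i
  rcases lt_or_eq_of_le (hle i) with h | h
  · exact h
  · exfalso
    have hall : ∀ j, a j = 0 := fun j => hprop i j h
    have : a = 0 := funext hall
    obtain ⟨j, hj⟩ := hstrict
    rw [this, mulVec_zero] at hj
    exact lt_irrefl 0 hj
end

section
/- Let M be a negative definite symmetric real n×n matrix with nonnegative off-diagonal entries whose associated graph is connected, and let a be a real vector with (Ma)_j ≥ 0 for all j. Then either a_i = 0 for all i, or a_i < 0 for all i. -/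
open Matrix

/-- Key lemma, connected case: if `M` is a negative definite symmetric real
matrix with nonnegative off-diagonal entries, whose associated graph (edges
where `M i j > 0`, `i ≠ j`) is connected, and `(M a)_j ≥ 0` for all `j`, then
either `a_i = 0` for all `i` or `a_i < 0` for all `i`. -/
theorem neg_def_connected_dichotomy {n : ℕ} (M : Matrix (Fin n) (Fin n) ℝ)
    (hsymm : M.IsSymm)
    (hneg : ∀ x : Fin n → ℝ, x ≠ 0 → x ⬝ᵥ M.mulVec x < 0)
    (hoff : ∀ i j : Fin n, i ≠ j → 0 ≤ M i j)
    (hconn : ∀ i j : Fin n, Relation.ReflTransGen (fun k l => k ≠ l ∧ 0 < M k l) i j)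
    (a : Fin n → ℝ) (ha : ∀ j, 0 ≤ M.mulVec a j) :
    (∀ i, a i = 0) ∨ (∀ i, a i < 0) := by
  -- Step 1: every `a i` is nonpositive.
  have hle : ∀ i, a i ≤ 0 := by
    set p : Fin n → ℝ := fun i => max (a i) 0 with hpdef
    have hp0 : p = 0 := by
      by_contra hpne
      have h1 : 0 ≤ p ⬝ᵥ M.mulVec a := by
        apply Finset.sum_nonneg
        intro i _
        exact mul_nonneg (le_max_right _ _) (ha i)
      have h2 : 0 ≤ p ⬝ᵥ M.mulVec (p - a) := by
        simp only [dotProduct, Matrix.mulVec, Finset.mul_sum]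
        apply Finset.sum_nonneg
        intro i _
        apply Finset.sum_nonneg
        intro j _
        rcases eq_or_ne i j with rfl | hij
        · rcases le_total (a i) 0 with h | h
          · have : p i = 0 := by simp [hpdef, max_eq_right h]
            simp [this]
          · have : p i = a i := max_eq_left h
            simp [Pi.sub_apply, this]
        · refine mul_nonneg (le_max_right _ _) (mul_nonneg (hoff i j hij) ?_)
          have : a j ≤ p j := le_max_left _ _
          simpa [Pi.sub_apply] using sub_nonneg.mpr this
      have heq : p ⬝ᵥ M.mulVec p = p ⬝ᵥ M.mulVec a + p ⬝ᵥ M.mulVec (p - a) := by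
        rw [Matrix.mulVec_sub, dotProduct_sub]; ring
      have : 0 ≤ p ⬝ᵥ M.mulVec p := by rw [heq]; positivity
      exact absurd (hneg p hpne) (not_lt.2 this)
    intro i
    have hpi : p i = 0 := congrFun hp0 i
    have : a i ≤ p i := le_max_left _ _
    linarith
  -- Step 2: zeros propagate along edges.
  have prop : ∀ i, a i = 0 → ∀ j, i ≠ j → 0 < M i j → a j = 0 := by
    intro i hi j hij hM
    have hsum : ∀ k ∈ Finset.univ, M i k * a k ≤ 0 := by
      intro k _
      rcases eq_or_ne k i with rfl | hk
      · rw [hi]; simp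
      · exact mul_nonpos_iff.mpr (Or.inl ⟨hoff i k (Ne.symm hk), hle k⟩)
    have hmv : M.mulVec a i = ∑ k, M i k * a k := rfl
    have h0 : ∑ k, M i k * a k = 0 :=
      le_antisymm (Finset.sum_nonpos hsum) (by rw [← hmv]; exact ha i)
    have := (Finset.sum_eq_zero_iff_of_nonpos hsum).mp h0 j (Finset.mem_univ j)
    exact (mul_eq_zero.mp this).resolve_left (ne_of_gt hM)
  by_cases hz : ∃ i, a i = 0
  · left
    obtain ⟨i0, hi0⟩ := hz
    intro j
    have h := hconn i0 j
    induction h with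
    | refl => exact hi0
    | tail _ hstep ih => exact prop _ ih _ hstep.1 hstep.2
  · right
    push_neg at hz
    exact fun i => lt_of_le_of_ne (hle i) (hz i)
end

section
/- Let B ⊆ ℝ be a set satisfying the descending chain condition and let a ∈ ℝ. Then there exists δ > 0 such that for all positive integers m_1,...,m_s and all β_1,...,β_s ∈ B, if Σ m_i β_i - a > 0 then Σ m_i β_i - a ≥ δ. -/
open Set Pointwise

/-- Iterated sumsets of `B`: `sumsC B n` contains all sums of at most `n`
elements of `B` (with repetition). -/
def sumsC (B : Set ℝ) : ℕ → Set ℝ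
  | 0 => {0}
  | n + 1 => sumsC B n ∪ (B + sumsC B n)

lemma sumsC_isWF {B : Set ℝ} (hB : B.IsWF) : ∀ n, (sumsC B n).IsWF := by
  intro n
  induction n with
  | zero => exact (Set.finite_singleton 0).isWF
  | succ n ih => exact ih.union (hB.add ih)

lemma sumsC_mono {B : Set ℝ} : Monotone (sumsC B) := by
  apply monotone_nat_of_le_succ
  intro n
  exact Set.subset_union_left

lemma list_sum_mem_sumsC {B : Set ℝ} {ε : ℝ} (hε : 0 < ε) (hB : B ⊆ Set.Icc ε 1)
    (l : List ℝ) (hl : ∀ y ∈ l, y ∈ B) :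
    l.sum ∈ sumsC B l.length ∧ (l.length : ℝ) * ε ≤ l.sum := by
  induction l with
  | nil => simp [sumsC]
  | cons x t ih =>
    have hx : x ∈ B := hl x List.mem_cons_self
    have ht := ih (fun y hy => hl y (List.mem_cons_of_mem _ hy))
    constructor
    · exact Or.inr ⟨x, hx, t.sum, ht.1, rfl⟩
    · have hxε : ε ≤ x := (hB hx).1
      simp only [List.length_cons]
      push_cast
      calc ((t.length : ℝ) + 1) * ε = ε + (t.length : ℝ) * ε := by ring
        _ ≤ x + t.sum := add_le_add hxε ht.2
      

/-- The set of all finite positive integer combinations of elements of `B`. -/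
def sumSet (B : Set ℝ) : Set ℝ :=
  {x | ∃ (s : ℕ) (m : Fin s → ℕ) (β : Fin s → ℝ),
    (∀ i, 0 < m i) ∧ (∀ i, β i ∈ B) ∧ x = ∑ i, (m i : ℝ) * β i}

lemma mem_sumSet_exists_list {B : Set ℝ} {x : ℝ} (hx : x ∈ sumSet B) :
    ∃ l : List ℝ, (∀ y ∈ l, y ∈ B) ∧ l.sum = x := by
  obtain ⟨s, m, β, _, hβ, rfl⟩ := hx
  refine ⟨(List.ofFn (fun i => List.replicate (m i) (β i))).flatten, ?_, ?_⟩
  · intro y hy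
    rw [List.mem_flatten] at hy
    obtain ⟨L, hL, hyL⟩ := hy
    rw [List.mem_ofFn] at hL
    obtain ⟨i, rfl⟩ := hL
    rw [List.eq_of_mem_replicate hyL]
    exact hβ i
  · rw [List.sum_flatten]
    rw [List.map_ofFn, List.sum_ofFn]
    congr 1
    funext i
    simp [List.sum_replicate, nsmul_eq_mul]

lemma sumSet_isWF {B : Set ℝ} {ε : ℝ} (hε : 0 < ε) (hB : B ⊆ Set.Icc ε 1)
    (hWF : B.IsWF) : (sumSet B).IsWF := by
  rw [Set.isWF_iff_no_descending_seq]
  intro f hf hmem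
  -- all terms from index 1 on are bounded by f 0
  set M : ℝ := f 0 with hM
  set N : ℕ := ⌈M / ε⌉₊ with hN
  have hbound : ∀ n, f (n + 1) ∈ sumsC B N := by
    intro n
    obtain ⟨l, hlB, hlsum⟩ := mem_sumSet_exists_list (hmem (n + 1))
    obtain ⟨h1, h2⟩ := list_sum_mem_sumsC hε hB l hlB
    have hlt : l.sum < M := by rw [hlsum]; exact hf (Nat.succ_pos n)
    have hk : l.length ≤ N := by
      by_contra hk
      push_neg at hk
      have : (N : ℝ) * ε ≤ (l.length : ℝ) * ε := by
        apply mul_le_mul_of_nonneg_right _ hε.le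
        exact_mod_cast hk.le
      have hMN : M ≤ (N : ℝ) * ε := by
        rw [hN]
        have := Nat.le_ceil (M / ε)
        calc M = M / ε * ε := by field_simp
          _ ≤ (⌈M / ε⌉₊ : ℝ) * ε := mul_le_mul_of_nonneg_right this hε.le
      linarith
    exact sumsC_mono hk (hlsum ▸ h1)
  have := (Set.isWF_iff_no_descending_seq.mp (sumsC_isWF hWF N))
    (fun n => f (n + 1)) (fun i j hij => hf (by omega))
  exact this hbound

/-- DCC gap property: if `B ⊆ [ε, 1]` (with `ε > 0`) satisfies the descending
chain condition (no strictly decreasing infinite sequence in `B`), then for any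
`a ∈ ℝ` there is a `δ > 0` such that for all positive integers `m₁, …, m_s` and
all `β₁, …, β_s ∈ B`, if `∑ mᵢ βᵢ - a > 0` then `∑ mᵢ βᵢ - a ≥ δ`. -/
theorem dcc_gap (B : Set ℝ) (ε : ℝ) (hε : 0 < ε) (hB : B ⊆ Set.Icc ε 1)
    (hDCC : ¬∃ f : ℕ → ℝ, (∀ n, f n ∈ B) ∧ StrictAnti f) (a : ℝ) :
    ∃ δ > 0, ∀ (s : ℕ) (m : Fin s → ℕ) (β : Fin s → ℝ),
      (∀ i, 0 < m i) → (∀ i, β i ∈ B) →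
      0 < (∑ i, (m i : ℝ) * β i) - a → δ ≤ (∑ i, (m i : ℝ) * β i) - a := by
  have hWF : B.IsWF := by
    rw [Set.isWF_iff_no_descending_seq]
    intro f hf hmem
    exact hDCC ⟨f, hmem, hf⟩
  have hVWF : (sumSet B).IsWF := sumSet_isWF hε hB hWF
  set T : Set ℝ := {x ∈ sumSet B | a < x} with hT
  have hTWF : T.IsWF := hVWF.mono (Set.sep_subset _ _)
  by_cases hTne : T.Nonempty
  · refine ⟨hTWF.min hTne - a, ?_, ?_⟩
    · have := (hTWF.min_mem hTne).2
      linarith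
    · intro s m β hm hβ hpos
      have hmemT : (∑ i, (m i : ℝ) * β i) ∈ T :=
        ⟨⟨s, m, β, hm, hβ, rfl⟩, by linarith⟩
      have := hTWF.min_le hTne hmemT
      linarith
  · refine ⟨1, one_pos, ?_⟩
    intro s m β hm hβ hpos
    exact absurd ⟨⟨s, m, β, hm, hβ, rfl⟩, by linarith⟩ (fun h => hTne ⟨_, h⟩)
end
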